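/- For an odd prime r and all j = 0, 1, ..., (r-1)/2, one has H(i z ω_j, z) = 2 (iz)^r and H(-i z ω_j, z) = -2 (iz)^r, where ω_j = ζ_r^j + ζ_r^{-j} (so ω_0 = 2), i^2 = -1, and H(x,z) = z^{r-1} x h((x/z)^2 + 2). -/

import Mathlib

open Polynomial Finset Complex

/-- For an odd prime `r` and all `j = 0, 1, ..., (r-1)/2`, one has `H(izω_j, z) = 2(iz)^r` and
`H(-izω_j, z) = -2(iz)^r`, where `ω_j = ζ_r^j + ζ_r^{-j}`, `i² = -1`, and
`H(x,z) = z^(r-1) x h((x/z)² + 2)` with `h(x) = ∏_{j=1}^{(r-1)/2} (x - ω_j)`. -/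
theorem H_evaluation_at_omega (r : ℕ) (hr : r.Prime) (hodd : Odd r)
    (ζ : ℂ) (hζ : IsPrimitiveRoot ζ r) (z : ℂ) (hz : z ≠ 0)
    (j : ℕ) (hj : j ≤ (r - 1) / 2) :
    (z ^ (r - 1) * (Complex.I * z * (ζ ^ j + ζ⁻¹ ^ j)) *
        ∏ k ∈ Finset.Icc 1 ((r - 1) / 2),
          ((Complex.I * z * (ζ ^ j + ζ⁻¹ ^ j) / z) ^ 2 + 2 - (ζ ^ k + ζ⁻¹ ^ k)) =
      2 * (Complex.I * z) ^ r) ∧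
    (z ^ (r - 1) * (-(Complex.I * z * (ζ ^ j + ζ⁻¹ ^ j))) *
        ∏ k ∈ Finset.Icc 1 ((r - 1) / 2),
          ((-(Complex.I * z * (ζ ^ j + ζ⁻¹ ^ j)) / z) ^ 2 + 2 - (ζ ^ k + ζ⁻¹ ^ k)) =
      -(2 * (Complex.I * z) ^ r)) := by
  obtain ⟨m, hm⟩ := hodd
  have hm2 : (r - 1) / 2 = m := by omega
  have hr0 : 0 < r := by omega
  have hζ0 : ζ ≠ 0 := hζ.ne_zero hr0.ne'
  have hζr : ζ ^ r = 1 := hζ.pow_eq_one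
  set u : ℂ := ζ ^ j with hu
  have hu0 : u ≠ 0 := pow_ne_zero _ hζ0
  have huj : ζ⁻¹ ^ j = u⁻¹ := by rw [inv_pow]
  have hua : u * u⁻¹ = 1 := mul_inv_cancel₀ hu0
  have hur : u ^ r = 1 := by rw [hu, ← pow_mul, mul_comm, pow_mul, hζr, one_pow]
  have hu2 : u ^ 2 + 1 ≠ 0 := by
    intro h
    have h2 : u ^ 2 = -1 := by linear_combination h
    have h3 : ((1:ℂ)) = -1 := by
      calc (1:ℂ) = (u ^ r) ^ 2 := by rw [hur]; ring
      _ = (u ^ 2) ^ r := by ring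
      _ = (-1) ^ r := by rw [h2]
      _ = -1 := by rw [hm, pow_succ, pow_mul]; norm_num
    norm_num at h3
  -- value of the big product over Icc 1 (2m)
  have hbig : (u^2 + 1) * ∏ k ∈ Finset.Icc 1 (2*m), (u^2 + ζ ^ k) = 2 := by
    have hpoly := X_pow_sub_C_eq_prod hζ (n := r) (by omega) (one_pow r)
    have heval := congrArg (Polynomial.eval (-u^2)) hpoly
    simp only [eval_sub, eval_pow, eval_X, eval_C, eval_prod, eval_mul, mul_one] at heval
    have hsplit : ∏ i ∈ Finset.range r, (-u^2 - ζ^i) =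
        (-u^2 - 1) * ∏ i ∈ Finset.Icc 1 (2*m), (-u^2 - ζ^i) := by
      rw [Finset.range_eq_Ico, Finset.prod_eq_prod_Ico_succ_bot (show 0 < r by omega)]
      simp only [pow_zero]
      congr 1
      rw [show Finset.Ico (0+1) r = Finset.Ico 1 (2*m).succ by rw [hm]; rfl]
      rw [Nat.succ_eq_add_one, Finset.Ico_add_one_right_eq_Icc]
    have hneg : ∏ i ∈ Finset.Icc 1 (2*m), (-u^2 - ζ^i) =
        ∏ i ∈ Finset.Icc 1 (2*m), (u^2 + ζ^i) := by
      rw [show (∏ i ∈ Finset.Icc 1 (2*m), (-u^2 - ζ^i)) =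
          ∏ i ∈ Finset.Icc 1 (2*m), (-1) * (u^2 + ζ^i) from
            Finset.prod_congr rfl (by intros; ring),
        Finset.prod_mul_distrib, Finset.prod_const, Nat.card_Icc]
      simp [pow_mul]
    have hlhs : (-u^2)^r - 1 = -2 := by
      have h2 : (u^2)^r = 1 := by rw [← pow_mul, mul_comm, pow_mul, hur, one_pow]
      rw [neg_pow, h2, hm, pow_succ, pow_mul]
      norm_num
    rw [hsplit, hneg, hlhs] at heval
    linear_combination heval
  -- reindexing
  have hpair : ∏ k ∈ Finset.Icc 1 m, ((u^2 + ζ ^ k) * (u^2 + ζ⁻¹ ^ k)) =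
      ∏ k ∈ Finset.Icc 1 (2*m), (u^2 + ζ ^ k) := by
    have hinv : ∀ k, 1 ≤ k → k ≤ r → ζ⁻¹ ^ k = ζ ^ (r - k) := by
      intro k h1 h2
      rw [inv_pow]
      refine (eq_inv_of_mul_eq_one_left ?_).symm
      rw [← pow_add, Nat.sub_add_cancel h2, hζr]
    rw [Finset.prod_mul_distrib]
    have h2nd : ∏ k ∈ Finset.Icc 1 m, (u^2 + ζ⁻¹ ^ k) =
        ∏ k ∈ Finset.Icc (m+1) (2*m), (u^2 + ζ ^ k) := by
      refine Finset.prod_nbij' (fun k => r - k) (fun k => r - k) ?_ ?_ ?_ ?_ ?_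
      · intro a ha; simp only [Finset.mem_Icc] at *; omega
      · intro a ha; simp only [Finset.mem_Icc] at *; omega
      · intro a ha; simp only [Finset.mem_Icc] at ha; omega
      · intro a ha; simp only [Finset.mem_Icc] at ha; omega
      · intro a ha; simp only [Finset.mem_Icc] at ha
        rw [hinv a (by omega) (by omega)]
    rw [h2nd, show Finset.Icc 1 m = Finset.Ioc 0 m by rw [← Finset.Icc_add_one_left_eq_Ioc]; rfl,
      show Finset.Icc (m+1) (2*m) = Finset.Ioc m (2*m) by rw [← Finset.Icc_add_one_left_eq_Ioc],
      show Finset.Icc 1 (2*m) = Finset.Ioc 0 (2*m) by rw [← Finset.Icc_add_one_left_eq_Ioc]; rfl,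
      Finset.prod_Ioc_consecutive _ (by omega) (by omega)]
  -- per-term simplification
  have hterm : ∀ k, (Complex.I * z * (u + u⁻¹) / z) ^ 2 + 2 - (ζ ^ k + ζ⁻¹ ^ k) =
      -(u⁻¹^2) * ((u^2 + ζ ^ k) * (u^2 + ζ⁻¹ ^ k)) := by
    intro k
    have h1 : Complex.I * z * (u + u⁻¹) / z = Complex.I * (u + u⁻¹) := by
      field_simp
    have hcb : ζ ^ k * ζ⁻¹ ^ k = 1 := by
      rw [inv_pow, mul_inv_cancel₀ (pow_ne_zero _ hζ0)]
    rw [h1]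
    linear_combination ((u + u⁻¹)^2) * Complex.I_sq +
      (u^2*(u*u⁻¹+1) + (ζ^k + ζ⁻¹^k)*(u*u⁻¹+1) - 2) * hua + (u⁻¹^2) * hcb
  -- powers
  have h2m : u ^ (2*m) = u⁻¹ := by
    refine eq_inv_of_mul_eq_one_left ?_
    rw [← pow_succ, ← hm, hur]
  have hinv2 : u⁻¹ ^ (2*m) = u := by rw [inv_pow, h2m, inv_inv]
  have hIr : (Complex.I * z) ^ r = (-1:ℂ)^m * Complex.I * (z^(2*m) * z) := by
    rw [mul_pow, hm, pow_succ, pow_succ, pow_mul, pow_mul, Complex.I_sq]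
  have key : z ^ (r - 1) * (Complex.I * z * (u + u⁻¹)) *
      ∏ k ∈ Finset.Icc 1 ((r - 1) / 2),
        ((Complex.I * z * (u + u⁻¹) / z) ^ 2 + 2 - (ζ ^ k + ζ⁻¹ ^ k)) =
      2 * (Complex.I * z) ^ r := by
    rw [hm2, Finset.prod_congr rfl (fun k _ => hterm k), Finset.prod_mul_distrib,
      Finset.prod_const, Nat.card_Icc, show m + 1 - 1 = m from rfl, hpair,
      show r - 1 = 2*m by omega, hIr, neg_pow, ← pow_mul, hinv2]
    linear_combination ((-1:ℂ)^m * Complex.I * z^(2*m) * z) * hbig +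
      ((-1:ℂ)^m * Complex.I * z^(2*m) * z *
        (∏ k ∈ Finset.Icc 1 (2*m), (u^2 + ζ^k))) * hua
  rw [huj]
  constructor
  · exact key
  · have hprodeq : ∏ k ∈ Finset.Icc 1 ((r - 1) / 2),
        ((-(Complex.I * z * (u + u⁻¹)) / z) ^ 2 + 2 - (ζ ^ k + ζ⁻¹ ^ k)) =
        ∏ k ∈ Finset.Icc 1 ((r - 1) / 2),
        ((Complex.I * z * (u + u⁻¹) / z) ^ 2 + 2 - (ζ ^ k + ζ⁻¹ ^ k)) :=
      Finset.prod_congr rfl (fun k _ => by rw [neg_div, neg_sq])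
    rw [hprodeq]
    linear_combination -key
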